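/- arXiv:2303.10544 — 2 statements merged into one kernel-verified Lean document; each statement's English description precedes it below -/
import Mathlib

section
/- Let M be the Choi-Jamiołkowski matrix of a linear map 𝓜 on matrices, M = Σᵢⱼ |i⟩⟨j|ᵀ ⊗ 𝓜(|i⟩⟨j|), and let ρ₁ be any matrix. Then Tr₁[(1/2)(M(ρ₁⊗I) + (ρ₁⊗I)M)] = 𝓜(ρ₁), i.e., the partial trace of the pseudo-density matrix over the first factor equals the output state of the channel. -/
open Matrix Kronecker

/-- Partial trace over the first tensor factor. -/
noncomputable def ptraceLeft {d₁ d₂ : Type*} [Fintype d₁]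
    (M : Matrix (d₁ × d₂) (d₁ × d₂) ℂ) : Matrix d₂ d₂ ℂ :=
  fun k l => ∑ i : d₁, M (i, k) (i, l)

/-- The Choi–Jamiołkowski matrix `M = Σᵢⱼ |i⟩⟨j|ᵀ ⊗ 𝓜(|i⟩⟨j|)` of a linear map on matrices. -/
noncomputable def choiMatrix {d : Type*} [Fintype d] [DecidableEq d]
    (𝓜 : Matrix d d ℂ →ₗ[ℂ] Matrix d d ℂ) : Matrix (d × d) (d × d) ℂ :=
  ∑ i : d, ∑ j : d, (Matrix.single i j (1 : ℂ))ᵀ ⊗ₖ 𝓜 (Matrix.single i j 1)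

lemma hrho {d : Type*} [Fintype d] [DecidableEq d]
    (𝓜 : Matrix d d ℂ →ₗ[ℂ] Matrix d d ℂ) (ρ₁ : Matrix d d ℂ) :
    𝓜 ρ₁ = ∑ i : d, ∑ j : d, ρ₁ i j • 𝓜 (Matrix.single i j 1) := by
  conv_lhs => rw [matrix_eq_sum_single ρ₁]
  simp only [map_sum]
  refine Finset.sum_congr rfl fun i _ => Finset.sum_congr rfl fun j _ => ?_
  rw [show Matrix.single i j (ρ₁ i j) = ρ₁ i j • Matrix.single i j 1 by
    rw [Matrix.smul_single, smul_eq_mul, mul_one], _root_.map_smul]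

lemma key_right {d : Type*} [Fintype d] [DecidableEq d]
    (𝓜 : Matrix d d ℂ →ₗ[ℂ] Matrix d d ℂ) (ρ₁ : Matrix d d ℂ) :
    ptraceLeft (choiMatrix 𝓜 * (ρ₁ ⊗ₖ 1)) = 𝓜 ρ₁ := by
  ext k l
  rw [hrho 𝓜 ρ₁]
  simp only [ptraceLeft, choiMatrix, Matrix.mul_apply, Matrix.sum_apply,
    Matrix.kroneckerMap_apply, Matrix.smul_apply, Matrix.transpose_apply,
    Matrix.single, Matrix.one_apply, Fintype.sum_prod_type, Matrix.of_apply]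
  simp [Finset.sum_mul, Finset.mul_sum, ite_and, mul_comm]
  rw [Finset.sum_comm]

lemma key_left {d : Type*} [Fintype d] [DecidableEq d]
    (𝓜 : Matrix d d ℂ →ₗ[ℂ] Matrix d d ℂ) (ρ₁ : Matrix d d ℂ) :
    ptraceLeft ((ρ₁ ⊗ₖ 1) * choiMatrix 𝓜) = 𝓜 ρ₁ := by
  ext k l
  rw [hrho 𝓜 ρ₁]
  simp only [ptraceLeft, choiMatrix, Matrix.mul_apply, Matrix.sum_apply,
    Matrix.kroneckerMap_apply, Matrix.smul_apply, Matrix.transpose_apply,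
    Matrix.single, Matrix.one_apply, Fintype.sum_prod_type, Matrix.of_apply]
  simp [Finset.sum_mul, Finset.mul_sum, ite_and, mul_comm]

/-- Tracing the PDM `(1/2)(M(ρ₁⊗I) + (ρ₁⊗I)M)` over the first factor yields the
output state `𝓜(ρ₁)` of the channel. -/
theorem pdm_ptrace_first_eq_output_state {d : Type*} [Fintype d] [DecidableEq d]
    (𝓜 : Matrix d d ℂ →ₗ[ℂ] Matrix d d ℂ) (ρ₁ : Matrix d d ℂ) :
    ptraceLeft ((2 : ℂ)⁻¹ • (choiMatrix 𝓜 * (ρ₁ ⊗ₖ 1) + (ρ₁ ⊗ₖ 1) * choiMatrix 𝓜)) = 𝓜 ρ₁ := by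
  have h1 := key_right 𝓜 ρ₁
  have h2 := key_left 𝓜 ρ₁
  ext k l
  have e1 := congrFun (congrFun h1 k) l
  have e2 := congrFun (congrFun h2 k) l
  simp only [ptraceLeft, Matrix.smul_apply, Matrix.add_apply, smul_eq_mul,
    Finset.mul_sum, Finset.sum_add_distrib] at *
  rw [← Finset.mul_sum, Finset.sum_add_distrib, e1, e2]
  ring
end

section
/- Let 𝓛(ρ) = ⟨0|ρ|0⟩|0⟩⟨0| + ⟨1|ρ|1⟩|1⟩⟨1| be the measure-and-prepare channel with Choi matrix M = (1/2)(σ₀⊗σ₀ + σ₃⊗σ₃), and let ρ_A be a single-qubit density matrix with Bloch coordinates x = Tr(ρ_A σ₁), y = Tr(ρ_A σ₂), z = Tr(ρ_A σ₃). Then the pseudo-density matrix R = (1/2)(M(ρ_A⊗I) + (ρ_A⊗I)M) has a negative eigenvalue if and only if x² + y² > 0. -/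
open Matrix Kronecker ComplexOrder

/-- Pauli matrix σ₁. -/
noncomputable def pauli1 : Matrix (Fin 2) (Fin 2) ℂ := !![0, 1; 1, 0]
/-- Pauli matrix σ₂. -/
noncomputable def pauli2 : Matrix (Fin 2) (Fin 2) ℂ := !![0, -Complex.I; Complex.I, 0]
/-- Pauli matrix σ₃. -/
noncomputable def pauli3 : Matrix (Fin 2) (Fin 2) ℂ := !![1, 0; 0, -1]

/-- The Choi matrix `M = (1/2)(σ₀⊗σ₀ + σ₃⊗σ₃)` of the measure-and-prepare channel. -/
noncomputable def measPrepChoi : Matrix (Fin 2 × Fin 2) (Fin 2 × Fin 2) ℂ :=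
  (2 : ℂ)⁻¹ • ((1 : Matrix (Fin 2) (Fin 2) ℂ) ⊗ₖ 1 + pauli3 ⊗ₖ pauli3)

/-- For the measure-and-prepare channel with Choi matrix `M = (1/2)(σ₀⊗σ₀+σ₃⊗σ₃)` and a
qubit density matrix `ρ_A` with Bloch coordinates `x, y, z`, the PDM
`R = (1/2)(M(ρ_A⊗I) + (ρ_A⊗I)M)` has a negative eigenvalue iff `x² + y² > 0`. -/
theorem measure_prepare_pdm_negativity_iff_coherence
    (ρA : Matrix (Fin 2) (Fin 2) ℂ) (hρ : ρA.PosSemidef) (hρtr : ρA.trace = 1)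
    (x y z : ℝ)
    (hx : (ρA * pauli1).trace = (x : ℂ))
    (hy : (ρA * pauli2).trace = (y : ℂ))
    (hz : (ρA * pauli3).trace = (z : ℂ))
    (R : Matrix (Fin 2 × Fin 2) (Fin 2 × Fin 2) ℂ)
    (hRdef : R = (2 : ℂ)⁻¹ • (measPrepChoi * (ρA ⊗ₖ 1) + (ρA ⊗ₖ 1) * measPrepChoi))
    (hR : R.IsHermitian) :
    (∃ i, hR.eigenvalues i < 0) ↔ 0 < x ^ 2 + y ^ 2 := by
  -- entry facts
  have hstar : ρA 1 0 = star (ρA 0 1) := by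
    conv_lhs => rw [← hρ.1]
    simp [Matrix.conjTranspose_apply]
  simp only [Matrix.trace, Matrix.diag, Fin.sum_univ_two, Matrix.mul_apply, pauli1, pauli2,
    Matrix.cons_val', Matrix.cons_val_zero, Matrix.cons_val_one, Matrix.head_cons,
    Matrix.empty_val', Matrix.cons_val_fin_one, Matrix.head_fin_const, Matrix.of_apply]
      at hρtr hx hy
  ring_nf at hx hy
  have hb : ρA 0 1 = ((x : ℂ) - Complex.I * y) / 2 := by
    linear_combination hx / 2 - Complex.I / 2 * hy + (ρA 0 1 - ρA 1 0)/2 * Complex.I_sq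
  have hc : ρA 1 0 = ((x : ℂ) + Complex.I * y) / 2 := by
    linear_combination hx / 2 + Complex.I / 2 * hy + (ρA 1 0 - ρA 0 1)/2 * Complex.I_sq
  have hbc : ρA 0 1 * ρA 1 0 = ((x : ℂ) ^ 2 + (y : ℂ) ^ 2) / 4 := by
    rw [hb, hc]
    linear_combination (-(y:ℂ)^2 / 4) * Complex.I_sq
  have ha : (0 : ℂ) ≤ ρA 0 0 := by
    have h := hρ.dotProduct_mulVec_nonneg (fun i => if i = 0 then 1 else 0)
    simpa [dotProduct, Matrix.mulVec, Fin.sum_univ_two] using h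
  -- the quadratic form of R
  have key : ∀ v : Fin 2 × Fin 2 → ℂ, star v ⬝ᵥ R *ᵥ v
      = ρA 0 0 * (star (v (0,0)) * v (0,0)) + ρA 1 1 * (star (v (1,1)) * v (1,1))
      + (ρA 0 1 / 2) * (star (v (0,0)) * v (1,0)) + (ρA 1 0 / 2) * (star (v (1,0)) * v (0,0))
      + (ρA 0 1 / 2) * (star (v (0,1)) * v (1,1)) + (ρA 1 0 / 2) * (star (v (1,1)) * v (0,1)) := by
    intro v
    rw [hRdef]
    simp [measPrepChoi, pauli3, dotProduct, Matrix.mulVec, Matrix.mul_apply,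
      Fintype.sum_prod_type, Fin.sum_univ_two, Matrix.one_apply]
    ring
  constructor
  · rintro ⟨i, hi⟩
    by_contra hpos
    push_neg at hpos
    have hx0 : x = 0 := by nlinarith [sq_nonneg x, sq_nonneg y]
    have hy0 : y = 0 := by nlinarith [sq_nonneg x, sq_nonneg y]
    have hb0 : ρA 0 1 = 0 := by rw [hb, hx0, hy0]; simp
    have hc0 : ρA 1 0 = 0 := by rw [hc, hx0, hy0]; simp
    have hd : (0 : ℂ) ≤ ρA 1 1 := by
      have h := hρ.dotProduct_mulVec_nonneg (fun i => if i = 1 then 1 else 0)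
      simpa [dotProduct, Matrix.mulVec, Fin.sum_univ_two] using h
    have hPSD : R.PosSemidef := by
      refine PosSemidef.of_dotProduct_mulVec_nonneg hR (fun v => ?_)
      rw [key v, hb0, hc0]
      simp only [zero_div, zero_mul, add_zero]
      exact add_nonneg (mul_nonneg ha (star_mul_self_nonneg _))
        (mul_nonneg hd (star_mul_self_nonneg _))
    exact absurd (hPSD.eigenvalues_nonneg i) (not_le.2 hi)
  · intro hs
    by_contra h
    push_neg at h
    have hPSD : R.PosSemidef := hR.posSemidef_iff_eigenvalues_nonneg.2 h
    set s : ℂ := (x : ℂ) ^ 2 + (y : ℂ) ^ 2 with hsdef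
    have hsne : s ≠ 0 := by
      rw [hsdef]
      norm_cast
      positivity
    set v : Fin 2 × Fin 2 → ℂ := fun p => !![0, -(8 / s) * ρA 0 1; 0, 1] p.1 p.2 with hv
    have hform : star v ⬝ᵥ R *ᵥ v = ρA 1 1 - 2 := by
      rw [key v]
      have hvs : star (v (0,1)) = -(8 / s) * ρA 1 0 := by
        simp [hv, hstar, hsdef]
      simp only [hv]
      rw [show star ((fun p => !![0, -(8 / s) * ρA 0 1; 0, 1] p.1 p.2) ((0:Fin 2),(1:Fin 2)))
            = -(8 / s) * ρA 1 0 from hvs]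
      simp only [Matrix.cons_val', Matrix.cons_val_zero, Matrix.cons_val_one, Matrix.head_cons,
        Matrix.empty_val', Matrix.cons_val_fin_one, Matrix.head_fin_const, Matrix.of_apply]
      simp only [star_one]
      field_simp
      linear_combination (-16:ℂ) * hbc
    have h2 := hPSD.dotProduct_mulVec_nonneg v
    rw [hform] at h2
    have h3 : (0 : ℂ) ≤ ρA 0 0 + (ρA 1 1 - 2) := add_nonneg ha h2
    have h4 : ρA 0 0 + (ρA 1 1 - 2) = -1 := by linear_combination hρtr
    rw [h4] at h3
    simp [Complex.le_def] at h3
    norm_num at h3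
end
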